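/- Let n be a positive integer, a ∈ ℂ \ {0}, p(z)=(z-a)^n, and q(z) = -∑_{j=0}^{⌊(n-1)/2⌋} binom(n,2j+1) a^(2j+1) z^(n-2j-1). Then for each k with 1 ≤ k ≤ n, the coefficient of (z-a)^(-k) in the partial fraction expansion of q(z)/p(z), namely q^{(n-k)}(a)/(n-k)!, equals -2^(k-1) a^k binom(n,k). -/

import Mathlib

lemma iteratedDeriv_diff_pow (b c : ℂ) (nn : ℕ) : ∀ (m : ℕ), m ≤ nn →
    iteratedDeriv m (fun z : ℂ => ((z + b) ^ nn - (z + c) ^ nn) / 2)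
      = fun z => (nn.descFactorial m : ℂ) * ((z + b) ^ (nn - m) - (z + c) ^ (nn - m)) / 2 := by
  intro m
  induction m with
  | zero => intro _; funext z; simp [iteratedDeriv_zero]
  | succ m ih =>
    intro h
    rw [iteratedDeriv_succ, ih (by omega)]
    funext z
    have hd : HasDerivAt (fun z : ℂ =>
        (nn.descFactorial m : ℂ) * ((z + b) ^ (nn - m) - (z + c) ^ (nn - m)) / 2)
        ((nn.descFactorial m : ℂ) * (((nn - m : ℕ) * (z + b) ^ (nn - m - 1) * 1)
          - ((nn - m : ℕ) * (z + c) ^ (nn - m - 1) * 1)) / 2) z :=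
      (((((hasDerivAt_id z).add_const b).pow (nn - m)).sub
        (((hasDerivAt_id z).add_const c).pow (nn - m))).const_mul _).div_const 2
    rw [hd.deriv, Nat.descFactorial_succ]
    have h2 : nn - (m + 1) = nn - m - 1 := by omega
    rw [h2]
    push_cast [Nat.cast_sub (by omega : m ≤ nn)]
    ring

lemma q_closed_form (n : ℕ) (hn : 0 < n) (a z : ℂ) :
    (z + a) ^ n - (z + (-a)) ^ n
      = 2 * ∑ j ∈ Finset.range ((n - 1) / 2 + 1),
          (n.choose (2 * j + 1) : ℂ) * a ^ (2 * j + 1) * z ^ (n - (2 * j + 1)) := by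
  have h1 : (z + a) ^ n = ∑ m ∈ Finset.range (n + 1),
      a ^ m * z ^ (n - m) * (n.choose m : ℂ) := by
    rw [add_comm z a, add_pow]
  have h2 : (z + (-a)) ^ n = ∑ m ∈ Finset.range (n + 1),
      (-a) ^ m * z ^ (n - m) * (n.choose m : ℂ) := by
    rw [add_comm z (-a), add_pow]
  rw [h1, h2, ← Finset.sum_sub_distrib]
  have key : ∑ m ∈ Finset.range (n + 1),
      (a ^ m * z ^ (n - m) * (n.choose m : ℂ) - (-a) ^ m * z ^ (n - m) * (n.choose m : ℂ))
      = ∑ m ∈ (Finset.range (n + 1)).filter (fun m => Odd m),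
      (a ^ m * z ^ (n - m) * (n.choose m : ℂ) - (-a) ^ m * z ^ (n - m) * (n.choose m : ℂ)) := by
    rw [Finset.sum_filter_of_ne]
    intro x _ hx
    by_contra hodd
    rw [Nat.not_odd_iff_even] at hodd
    rw [hodd.neg_pow] at hx
    simp at hx
  rw [key, Finset.mul_sum]
  apply Finset.sum_nbij' (i := fun m => m / 2) (j := fun j => 2 * j + 1)
  · intro m hm
    simp only [Finset.mem_filter, Finset.mem_range] at hm
    simp only [Finset.mem_range]
    obtain ⟨hm1, r, hr⟩ := hm
    omega
  · intro j hj
    simp only [Finset.mem_range] at hj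
    simp only [Finset.mem_filter, Finset.mem_range]
    constructor
    · omega
    · exact ⟨j, by omega⟩
  · intro m hm
    simp only [Finset.mem_filter, Finset.mem_range] at hm
    obtain ⟨_, r, hr⟩ := hm
    omega
  · intro j _; omega
  · intro m hm
    simp only [Finset.mem_filter, Finset.mem_range] at hm
    obtain ⟨_, hodd⟩ := hm
    obtain ⟨r, hr⟩ := hodd
    have : 2 * (m / 2) + 1 = m := by omega
    rw [this]
    have hodd' : Odd m := ⟨r, hr⟩
    rw [hodd'.neg_pow]
    ring

theorem partial_fraction_coefficients (n : ℕ) (hn : 0 < n) (a : ℂ) (ha : a ≠ 0)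
    (q : ℂ → ℂ)
    (hq : ∀ z : ℂ, q z = -∑ j ∈ Finset.range ((n - 1) / 2 + 1),
        (n.choose (2 * j + 1) : ℂ) * a ^ (2 * j + 1) * z ^ (n - (2 * j + 1)))
    (k : ℕ) (hk1 : 1 ≤ k) (hkn : k ≤ n) :
    iteratedDeriv (n - k) q a / (Nat.factorial (n - k) : ℂ) =
      -(2 : ℂ) ^ (k - 1) * a ^ k * (n.choose k : ℂ) := by
  have hqeq : q = fun z : ℂ => ((z + (-a)) ^ n - (z + a) ^ n) / 2 := by
    funext z
    rw [hq z]
    linear_combination ((1 : ℂ) / 2) * q_closed_form n hn a z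
  rw [hqeq, iteratedDeriv_diff_pow (-a) a n (n - k) (by omega)]
  beta_reduce
  have hnk : n - (n - k) = k := by omega
  rw [hnk]
  have hzero : (a + -a) ^ k = 0 := by
    rw [add_neg_cancel, zero_pow (by omega)]
  rw [hzero]
  -- descFactorial identity
  have hdesc : n.descFactorial (n - k) = n.choose k * (n - k).factorial := by
    have h1 : (n - (n - k)).factorial * n.descFactorial (n - k) = n.factorial :=
      Nat.factorial_mul_descFactorial (by omega)
    rw [hnk] at h1
    have h2 : n.choose k * k.factorial * (n - k).factorial = n.factorial :=
      Nat.choose_mul_factorial_mul_factorial hkn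
    have := h1.trans h2.symm
    have hkf : 0 < k.factorial := Nat.factorial_pos k
    apply Nat.eq_of_mul_eq_mul_left hkf
    rw [this]; ring
  rw [hdesc]
  obtain ⟨k', rfl⟩ : ∃ k', k = k' + 1 := ⟨k - 1, by omega⟩
  have hfac : ((n - (k' + 1)).factorial : ℂ) ≠ 0 := by
    exact_mod_cast (Nat.factorial_pos _).ne'
  push_cast
  field_simp
  ring
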